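/- Let f : ℝ × ℝ → ℝ be continuous and 1-periodic in the time variable. Suppose the equation x' = f(t,x) admits a subharmonic solution of order 2, i.e. there exists a solution x with x(t+2) = x(t) for all t ∈ ℝ and x(t₁+1) ≠ x(t₁) for some t₁ ∈ ℝ. Then for every integer n ≥ 1 there exists a solution xₙ of x' = f(t,x) with xₙ(t+n) = xₙ(t) for all t ∈ ℝ and such that no integer k with 1 ≤ k < n satisfies xₙ(t+k) = xₙ(t) for all t ∈ ℝ. -/

import Mathlib

/-- `x` is a (classical) solution of the ODE `x' = f(t,x)` on the whole real line. -/
def IsSolution (f : ℝ × ℝ → ℝ) (x : ℝ → ℝ) : Prop :=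
  ∀ t : ℝ, HasDerivAt x (f (t, x t)) t

/-- Integer shift pattern: `eps n j ∈ {0,1}`, with `eps n j ≡ j + [n ∣ j] (mod 2)`. -/
def eps (n : ℕ) (j : ℤ) : ℤ := (j + if (n:ℤ) ∣ j then 1 else 0) % 2

lemma eps_period (n : ℕ) (j : ℤ) : ((n:ℤ) + eps n (j + n)) % 2 = eps n j % 2 := by
  have hd : ((n:ℤ) ∣ j + n) ↔ ((n:ℤ) ∣ j) :=
    ⟨fun h => by simpa using h.sub (dvd_refl (n:ℤ)), fun h => h.add (dvd_refl _)⟩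
  simp only [eps, hd]
  split_ifs with h <;> omega

lemma eps_zero (n : ℕ) : eps n 0 = 1 := by simp [eps]

lemma eps_k (n k : ℕ) (h1 : 1 ≤ k) (h2 : k < n) : ((k:ℤ) + eps n k) % 2 = 0 := by
  have hnd : ¬ ((n:ℤ) ∣ (k:ℤ)) := by
    intro h
    have hk : (0:ℤ) < k := by exact_mod_cast h1
    have := Int.le_of_dvd hk h
    omega
  simp only [eps, hnd, if_false]
  omega

theorem period_two_implies_all_periods
    (f : ℝ × ℝ → ℝ) (hf : Continuous f)
    (hper : ∀ t x : ℝ, f (t + 1, x) = f (t, x))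
    (x : ℝ → ℝ) (hx : IsSolution f x)
    (hx2 : ∀ t : ℝ, x (t + 2) = x t)
    (t₁ : ℝ) (ht₁ : x (t₁ + 1) ≠ x t₁) :
    ∀ n : ℕ, 1 ≤ n → ∃ xn : ℝ → ℝ, IsSolution f xn ∧
      (∀ t : ℝ, xn (t + n) = xn t) ∧
      ∀ k : ℕ, 1 ≤ k → k < n → ¬ (∀ t : ℝ, xn (t + k) = xn t) := by
  intro n hn
  have hxc : Continuous x := by
    rw [continuous_iff_continuousAt]; exact fun t => (hx t).continuousAt
  -- f is periodic under any integer time shift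
  have hfint : ∀ (m : ℤ) (t y : ℝ), f (t + m, y) = f (t, y) := by
    intro m t y
    have hP : Function.Periodic (fun s => f (s, y)) 1 := fun s => hper s y
    have := (hP.int_mul m) t
    simpa using this
  have hx2per : Function.Periodic x 2 := hx2
  -- x is invariant under integer shifts of the same parity
  have hmod : ∀ (t : ℝ) (a b : ℤ), a % 2 = b % 2 → x (t + (a:ℝ)) = x (t + (b:ℝ)) := by
    intro t a b h
    obtain ⟨c, hc⟩ : (2:ℤ) ∣ a - b := by omega
    have hR : (a:ℝ) = (b:ℝ) + (c:ℝ) * 2 := by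
      have : a = b + c * 2 := by omega
      exact_mod_cast this
    rw [hR, ← add_assoc]
    exact (hx2per.int_mul c) (t + b)
  -- find t0 with x(t0+1) = x t0 by IVT
  obtain ⟨t0, ht0⟩ : ∃ t0 : ℝ, x (t0 + 1) = x t0 := by
    set g : ℝ → ℝ := fun t => x (t + 1) - x t with hg
    have hgc : Continuous g := (hxc.comp (continuous_id.add continuous_const)).sub hxc
    have hg1 : g (t₁ + 1) = -(g t₁) := by
      have : x (t₁ + 1 + 1) = x t₁ := by
        have := hx2 t₁; rw [← this]; ring_nf
      simp only [hg]; rw [this]; ring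
    have h0 : (0:ℝ) ∈ Set.uIcc (g t₁) (g (t₁ + 1)) := by
      rw [hg1, Set.mem_uIcc]
      rcases le_total (g t₁) 0 with h | h
      · left; constructor <;> linarith
      · right; constructor <;> linarith
    have := intermediate_value_uIcc (a := t₁) (b := t₁ + 1) hgc.continuousOn h0
    obtain ⟨t0, _, ht0⟩ := this
    exact ⟨t0, sub_eq_zero.mp ht0⟩
  -- x (t0 + m) = x t0 for every integer m
  have hintm : ∀ m : ℤ, x (t0 + (m:ℝ)) = x t0 := by
    intro m
    rcases Int.emod_two_eq m with h | h
    · have := hmod t0 m 0 (by omega)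
      simpa using this
    · have := hmod t0 m 1 (by omega)
      rw [this]
      simpa using ht0
  -- x (t₁ + m + 1) ≠ x (t₁ + m) for every integer m
  have hsign : ∀ m : ℤ, x (t₁ + (m:ℝ) + 1) ≠ x (t₁ + (m:ℝ)) := by
    intro m
    have e1 : t₁ + (m:ℝ) + 1 = t₁ + ((m + 1 : ℤ):ℝ) := by push_cast; ring
    rcases Int.emod_two_eq m with h | h
    · have h1 : x (t₁ + ((m+1:ℤ):ℝ)) = x (t₁ + ((1:ℤ):ℝ)) := hmod t₁ (m+1) 1 (by omega)
      have h2 : x (t₁ + (m:ℝ)) = x (t₁ + ((0:ℤ):ℝ)) := hmod t₁ m 0 (by omega)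
      rw [e1, h1, h2]
      simpa using ht₁
    · have h1 : x (t₁ + ((m+1:ℤ):ℝ)) = x (t₁ + ((0:ℤ):ℝ)) := hmod t₁ (m+1) 0 (by omega)
      have h2 : x (t₁ + (m:ℝ)) = x (t₁ + ((1:ℤ):ℝ)) := hmod t₁ m 1 (by omega)
      rw [e1, h1, h2]
      simpa using ht₁.symm
  -- the glued solution
  set z : ℝ → ℝ := fun t => x (t + ((eps n ⌊t - t0⌋ : ℤ):ℝ)) with hzdef
  have hz_eq : ∀ (s : ℝ) (j : ℤ), (j:ℝ) ≤ s - t0 → s - t0 < (j:ℝ) + 1 →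
      z s = x (s + ((eps n j : ℤ):ℝ)) := by
    intro s j h1 h2
    have : ⌊s - t0⌋ = j := Int.floor_eq_iff.mpr ⟨h1, h2⟩
    simp only [hzdef, this]
  -- shifted copies of x are solutions (with shifted argument)
  have hgd : ∀ (m : ℤ) (s : ℝ), HasDerivAt (fun u => x (u + (m:ℝ))) (f (s, x (s + (m:ℝ)))) s := by
    intro m s
    have h1 := hx (s + (m:ℝ))
    have h2 : HasDerivAt (fun u : ℝ => u + (m:ℝ)) 1 s := (hasDerivAt_id s).add_const _
    have h3 := h1.comp s h2
    have h4 : f (s + (m:ℝ), x (s + (m:ℝ))) = f (s, x (s + (m:ℝ))) := hfint m s _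
    simpa [Function.comp_def, h4] using h3
  refine ⟨z, ?_, ?_, ?_⟩
  · -- IsSolution
    intro t
    set j : ℤ := ⌊t - t0⌋ with hj
    have hj1 : (j:ℝ) ≤ t - t0 := Int.floor_le _
    have hj2 : t - t0 < (j:ℝ) + 1 := by
      have := Int.lt_floor_add_one (t - t0); push_cast at this ⊢; linarith
    have hzt : z t = x (t + ((eps n j : ℤ):ℝ)) := hz_eq t j hj1 hj2
    rcases eq_or_lt_of_le hj1 with heq | hlt
    · -- boundary case: t = t0 + j
      have hteq : t = t0 + (j:ℝ) := by linarith
      have hvt0 : z t = x t0 := by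
        rw [hzt, hteq]
        have : t0 + (j:ℝ) + ((eps n j:ℤ):ℝ) = t0 + ((j + eps n j : ℤ):ℝ) := by push_cast; ring
        rw [this, hintm]
      have hvL : x (t + ((eps n (j-1) : ℤ):ℝ)) = x t0 := by
        rw [hteq]
        have : t0 + (j:ℝ) + ((eps n (j-1):ℤ):ℝ) = t0 + ((j + eps n (j-1) : ℤ):ℝ) := by
          push_cast; ring
        rw [this, hintm]
      have hd : f (t, z t) = f (t, x t0) := by rw [hvt0]
      have hL : HasDerivWithinAt z (f (t, z t)) (Set.Iic t) t := by
        have hg := (hgd (eps n (j-1)) t).hasDerivWithinAt (s := Set.Iic t)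
        have hg' : HasDerivWithinAt (fun u => x (u + ((eps n (j-1):ℤ):ℝ))) (f (t, z t))
            (Set.Iic t) t := by
          rw [hd, ← hvL]; exact hg
        refine hg'.congr_of_eventuallyEq ?_ (by rw [hvL, hvt0])
        have hmem : {s : ℝ | z s = x (s + ((eps n (j-1):ℤ):ℝ))} ∈ nhdsWithin t (Set.Iic t) := by
          rw [mem_nhdsWithin]
          refine ⟨Set.Ioi (t - 1), isOpen_Ioi, by simp, ?_⟩
          rintro s ⟨hs1, hs2⟩
          simp only [Set.mem_Ioi] at hs1
          simp only [Set.mem_Iic] at hs2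
          rcases eq_or_lt_of_le hs2 with h | h
          · subst h; simp only [Set.mem_setOf_eq]; rw [hvt0, hvL]
          · simp only [Set.mem_setOf_eq]
            refine hz_eq s (j-1) ?_ ?_
            · push_cast; rw [hteq] at hs1; linarith
            · push_cast; rw [hteq] at h; linarith
        exact Filter.eventually_of_mem hmem (fun s hs => hs)
      have hR : HasDerivWithinAt z (f (t, z t)) (Set.Ici t) t := by
        have hg := (hgd (eps n j) t).hasDerivWithinAt (s := Set.Ici t)
        have hg' : HasDerivWithinAt (fun u => x (u + ((eps n j:ℤ):ℝ))) (f (t, z t))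
            (Set.Ici t) t := by
          rw [hzt]; exact hg
        refine hg'.congr_of_eventuallyEq ?_ hzt
        have hmem : {s : ℝ | z s = x (s + ((eps n j:ℤ):ℝ))} ∈ nhdsWithin t (Set.Ici t) := by
          rw [mem_nhdsWithin]
          refine ⟨Set.Iio (t + 1), isOpen_Iio, by simp, ?_⟩
          rintro s ⟨hs1, hs2⟩
          simp only [Set.mem_Iio] at hs1
          simp only [Set.mem_Ici] at hs2
          simp only [Set.mem_setOf_eq]
          refine hz_eq s j ?_ ?_
          · rw [hteq] at hs2; linarith
          · rw [hteq] at hs1; linarith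
        exact Filter.eventually_of_mem hmem (fun s hs => hs)
      have := hL.union hR
      rwa [Set.Iic_union_Ici, hasDerivWithinAt_univ] at this
    · -- interior case
      have hmem : Set.Ioo (t0 + (j:ℝ)) (t0 + (j:ℝ) + 1) ∈ nhds t :=
        Ioo_mem_nhds (by linarith) (by linarith)
      have hev : z =ᶠ[nhds t] fun u => x (u + ((eps n j:ℤ):ℝ)) := by
        refine Filter.eventually_of_mem hmem ?_
        rintro s ⟨hs1, hs2⟩
        exact hz_eq s j (by linarith) (by linarith)
      have hg := (hgd (eps n j) t).congr_of_eventuallyEq hev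
      rwa [← hzt] at hg
  · -- n-periodicity
    intro t
    set j : ℤ := ⌊t - t0⌋ with hj
    have hj1 : (j:ℝ) ≤ t - t0 := Int.floor_le _
    have hj2 : t - t0 < (j:ℝ) + 1 := by
      have := Int.lt_floor_add_one (t - t0); push_cast at this ⊢; linarith
    have hfl : z (t + (n:ℝ)) = x (t + (n:ℝ) + ((eps n (j + n) : ℤ):ℝ)) := by
      refine hz_eq (t + (n:ℝ)) (j + n) ?_ ?_
      · push_cast; linarith
      · push_cast; linarith
    rw [hfl, hz_eq t j hj1 hj2]
    have e1 : t + (n:ℝ) + ((eps n (j + n):ℤ):ℝ) = t + (((n:ℤ) + eps n (j + n) : ℤ):ℝ) := by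
      push_cast; ring
    rw [e1]
    exact hmod t ((n:ℤ) + eps n (j + n)) (eps n j) (eps_period n j)
  · -- no smaller integer period
    intro k hk1 hk2 hcon
    set m : ℤ := -⌊t₁ - t0⌋ with hm
    set t : ℝ := t₁ + (m:ℝ) with ht
    have hfl : ⌊t - t0⌋ = 0 := by
      have e : t - t0 = (t₁ - t0) + (m:ℝ) := by rw [ht]; ring
      rw [e, Int.floor_add_intCast]; omega
    have hb1 : (0:ℝ) ≤ t - t0 := by
      have := Int.floor_le (t - t0); rw [hfl] at this; simpa using this
    have hb2 : t - t0 < 1 := by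
      have := Int.lt_floor_add_one (t - t0); rw [hfl] at this; simpa using this
    have hzt : z t = x (t + ((eps n 0 : ℤ):ℝ)) := hz_eq t 0 (by simpa using hb1) (by push_cast; linarith)
    have hztk : z (t + (k:ℝ)) = x (t + (k:ℝ) + ((eps n k : ℤ):ℝ)) := by
      refine hz_eq (t + (k:ℝ)) k ?_ ?_
      · push_cast; linarith
      · push_cast; linarith
    have h1 : z t = x (t + 1) := by
      rw [hzt, eps_zero]; norm_num
    have h2 : z (t + (k:ℝ)) = x t := by
      rw [hztk]
      have e1 : t + (k:ℝ) + ((eps n k:ℤ):ℝ) = t + (((k:ℤ) + eps n k : ℤ):ℝ) := by push_cast; ring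
      rw [e1, hmod t ((k:ℤ) + eps n k) 0 (by rw [eps_k n k hk1 hk2]; rfl)]
      norm_num
    have := hcon t
    rw [h1, h2] at this
    exact hsign m (by rw [← ht] at *; rw [this])
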